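/- (Orthogonal Procrustes) Let V be an n×n complex positive-definite Hermitian matrix and let √V denote its unique positive-semidefinite square root. Then for every n×n complex matrix M with Mᴴ M = V, one has Tr((M − 1)ᴴ(M − 1)) ≥ Tr((√V − 1)ᴴ(√V − 1)); that is, among all matrices M with Gram matrix V, the one closest to the identity in the Frobenius distance is M = √V. -/

import Mathlib

open Matrix ComplexOrder
open scoped MatrixOrder

private lemma re_trace_unitary_mul_le (n : ℕ) (U S : Matrix (Fin n) (Fin n) ℂ)
    (hU : Uᴴ * U = 1) (hS : S.PosSemidef) :
    (Matrix.trace (U * S)).re ≤ (Matrix.trace S).re := by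
  set T := CFC.sqrt S with hT
  have hTH : Tᴴ = T := (CFC.sqrt_nonneg S).posSemidef.1
  have hTT : T * T = S := CFC.sqrt_mul_sqrt_self S hS.nonneg
  have key : ∀ i, ((T * (U * T)) i i).re ≤ (S i i).re := by
    intro i
    set x : EuclideanSpace ℂ (Fin n) := WithLp.toLp 2 (fun j => T j i) with hx
    set y : EuclideanSpace ℂ (Fin n) := WithLp.toLp 2 (fun j => (U * T) j i) with hyy
    have hy : ∀ j, y j = (U *ᵥ (x : Fin n → ℂ)) j := by
      intro j; simp [hyy, hx, Matrix.mul_apply, Matrix.mulVec, dotProduct]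
    have hconj : ∀ j, T i j = (starRingEnd ℂ) (T j i) := by
      intro j
      conv_lhs => rw [← hTH]
      simp [Matrix.conjTranspose_apply]
    have h1 : (T * (U * T)) i i = inner (𝕜 := ℂ) x y := by
      rw [PiLp.inner_apply]
      simp only [RCLike.inner_apply']
      rw [Matrix.mul_apply]
      refine Finset.sum_congr rfl fun j _ => ?_
      rw [hconj j]
    have h2 : (S i i) = inner (𝕜 := ℂ) x x := by
      rw [PiLp.inner_apply]
      simp only [RCLike.inner_apply']
      rw [← hTT, Matrix.mul_apply]
      refine Finset.sum_congr rfl fun j _ => ?_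
      rw [hconj j]
    have hyx : inner (𝕜 := ℂ) y y = inner (𝕜 := ℂ) x x := by
      rw [PiLp.inner_apply, PiLp.inner_apply]
      simp only [RCLike.inner_apply']
      have : ∑ j, (starRingEnd ℂ) (y j) * y j
          = dotProduct (star (U *ᵥ (x : Fin n → ℂ))) (U *ᵥ (x : Fin n → ℂ)) := by
        refine Finset.sum_congr rfl fun j _ => ?_
        rw [hy j]; rfl
      rw [this, Matrix.star_mulVec, Matrix.dotProduct_mulVec, Matrix.vecMul_vecMul, hU,
        Matrix.vecMul_one]
      rfl
    have hnorm : ‖y‖ ^ 2 = ‖x‖ ^ 2 := by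
      rw [← inner_self_eq_norm_sq (𝕜 := ℂ) y, ← inner_self_eq_norm_sq (𝕜 := ℂ) x, hyx]
    have hcs := re_inner_le_norm (𝕜 := ℂ) x y
    have hxx : (Complex.re (inner (𝕜 := ℂ) x x)) = ‖x‖ ^ 2 := inner_self_eq_norm_sq (𝕜 := ℂ) x
    have hcs' : (inner (𝕜 := ℂ) x y).re ≤ ‖x‖ * ‖y‖ := hcs
    rw [h1, h2]
    nlinarith [hcs', hxx, hnorm, sq_nonneg (‖x‖ - ‖y‖), norm_nonneg x, norm_nonneg y]
  have htr : Matrix.trace (U * S) = Matrix.trace (T * (U * T)) := by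
    rw [← hTT, ← mul_assoc, Matrix.trace_mul_comm]
  rw [htr]
  rw [Matrix.trace, Matrix.trace]
  rw [Complex.re_sum, Complex.re_sum]
  exact Finset.sum_le_sum fun i _ => key i

theorem stmt_7 (n : ℕ) (V : Matrix (Fin n) (Fin n) ℂ) (hV : V.PosDef)
    (M : Matrix (Fin n) (Fin n) ℂ) (hM : Mᴴ * M = V) :
    Matrix.trace ((CFC.sqrt V - 1)ᴴ * (CFC.sqrt V - 1)) ≤
      Matrix.trace ((M - 1)ᴴ * (M - 1)) := by
  set T := CFC.sqrt V with hT
  have hTH : Tᴴ = T := (CFC.sqrt_nonneg V).posSemidef.1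
  have hTT : T * T = V := CFC.sqrt_mul_sqrt_self V hV.posSemidef.nonneg
  -- T is invertible
  have hdet : IsUnit T.det := by
    have : T.det * T.det = V.det := by rw [← Matrix.det_mul, hTT]
    have hVd : V.det ≠ 0 := ne_of_gt hV.det_pos
    have : T.det ≠ 0 := fun h => hVd (by rw [← this, h, mul_zero])
    exact isUnit_iff_ne_zero.mpr this
  have hTinv : T⁻¹ * T = 1 := Matrix.nonsing_inv_mul T hdet
  have hTinv' : T * T⁻¹ = 1 := Matrix.mul_nonsing_inv T hdet
  set U := M * T⁻¹ with hU
  have hUU : Uᴴ * U = 1 := by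
    have hconjinv : (T⁻¹)ᴴ = T⁻¹ := by
      rw [Matrix.conjTranspose_nonsing_inv, hTH]
    calc Uᴴ * U = T⁻¹ * (Mᴴ * M) * T⁻¹ := by
          rw [hU, Matrix.conjTranspose_mul, hconjinv]; simp only [mul_assoc]
      _ = T⁻¹ * (T * T) * T⁻¹ := by rw [hM, hTT]
      _ = (T⁻¹ * T) * (T * T⁻¹) := by simp only [mul_assoc]
      _ = 1 := by rw [hTinv, hTinv']; simp
  have hUT : U * T = M := by rw [hU, mul_assoc, hTinv, mul_one]
  -- trace expansion
  have expand : ∀ A : Matrix (Fin n) (Fin n) ℂ,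
      Matrix.trace ((A - 1)ᴴ * (A - 1))
        = Matrix.trace (Aᴴ * A) + (n : ℂ) - (star (Matrix.trace A) + Matrix.trace A) := by
    intro A
    have : (A - 1)ᴴ * (A - 1) = Aᴴ * A + 1 - (Aᴴ + A) := by
      simp only [Matrix.conjTranspose_sub, Matrix.conjTranspose_one]
      noncomm_ring
    rw [this, Matrix.trace_sub, Matrix.trace_add, Matrix.trace_add, Matrix.trace_one,
      Matrix.trace_conjTranspose]
    simp [Fintype.card_fin]
  rw [expand, expand, hM, hTH, hTT]
  have hkey : (Matrix.trace M).re ≤ (Matrix.trace T).re := by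
    rw [← hUT]
    exact re_trace_unitary_mul_le n U T hUU (CFC.sqrt_nonneg V).posSemidef
  have hTHtr : Tᴴ * T = V := by rw [hTH, hTT]
  rw [Complex.le_def]
  constructor
  · simp only [Complex.sub_re, Complex.add_re, Complex.star_def, Complex.conj_re]
    linarith
  · simp only [Complex.sub_im, Complex.add_im, Complex.star_def, Complex.conj_im]
    ring
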